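/- Conversely, given S_1,...,S_m ∈ S_{Ψ_s}, probabilities p_i > 0 summing to 1, positive definite H with G_1 = Σ_i p_i (S_i^(1))† H S_i^(1), and [G_k, S_i^(k)] = 0 for all k ≥ 2 and all i, the operators A_i = √p_i · h (S_i^(1)) g_1^{-1} (where h†h = H) form a valid measurement: Σ_i A_i†A_i = 1, where trace normalizations are chosen so g_1†g_1 = G_1. -/
import Mathlib


open Matrix ComplexOrder

noncomputable section

/-- Lemma 2, sufficiency of the measurement: given unitaries
`S_i^(1)`, probabilities `p_i`, a positive definite `H = hᴴh` with
`G₁ = Σ_i p_i (S_i^(1))ᴴ H S_i^(1)` and `g₁ᴴg₁ = G₁`, the operators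
`A_i = √p_i · h S_i^(1) g₁⁻¹` form a valid measurement: `Σ_i A_iᴴA_i = 𝟙`.
(The commutation conditions `[G_k, S_i^(k)] = 0` for `k ≥ 2` are included as in
the lemma.) -/
theorem stmt17 {n m : ℕ} {d : Fin (n + 1) → ℕ}
    (S : Fin m → ∀ k, Matrix (Fin (d k)) (Fin (d k)) ℂ)
    (hSu : ∀ i k, S i k ∈ Matrix.unitaryGroup (Fin (d k)) ℂ)
    (p : Fin m → ℝ) (hp : ∀ i, 0 < p i) (hpsum : ∑ i, p i = 1)
    (g : ∀ k, Matrix (Fin (d k)) (Fin (d k)) ℂ) (hg : ∀ k, IsUnit (g k))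
    (hcomm : ∀ k, k ≠ 0 → ∀ i, Commute ((g k)ᴴ * g k) (S i k))
    (H h : Matrix (Fin (d 0)) (Fin (d 0)) ℂ)
    (hH : H.PosDef) (hhH : hᴴ * h = H)
    (hG : (g 0)ᴴ * g 0 = ∑ i, (p i : ℂ) • ((S i 0)ᴴ * H * S i 0)) :
    ∑ i, ((Real.sqrt (p i) : ℂ) • (h * S i 0 * (g 0)⁻¹))ᴴ *
      ((Real.sqrt (p i) : ℂ) • (h * S i 0 * (g 0)⁻¹)) = 1 := by
  have hdet : IsUnit (g 0).det := (Matrix.isUnit_iff_isUnit_det _).mp (hg 0)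
  have hinv : g 0 * (g 0)⁻¹ = 1 := Matrix.mul_nonsing_inv _ hdet
  have key : ∀ i : Fin m,
      ((Real.sqrt (p i) : ℂ) • (h * S i 0 * (g 0)⁻¹))ᴴ *
        ((Real.sqrt (p i) : ℂ) • (h * S i 0 * (g 0)⁻¹)) =
      ((g 0)⁻¹)ᴴ * ((p i : ℂ) • ((S i 0)ᴴ * H * S i 0)) * (g 0)⁻¹ := by
    intro i
    have hsq : (starRingEnd ℂ) (Real.sqrt (p i) : ℂ) * (Real.sqrt (p i) : ℂ) = (p i : ℂ) := by
      rw [Complex.conj_ofReal, ← Complex.ofReal_mul, Real.mul_self_sqrt (hp i).le]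
    rw [conjTranspose_smul, smul_mul_assoc, mul_smul_comm, smul_smul,
      show star (Real.sqrt (p i) : ℂ) * _ = _ from hsq, ← hhH]
    rw [mul_smul_comm, smul_mul_assoc]
    congr 1
    simp [conjTranspose_mul, Matrix.mul_assoc]
  calc ∑ i, ((Real.sqrt (p i) : ℂ) • (h * S i 0 * (g 0)⁻¹))ᴴ *
      ((Real.sqrt (p i) : ℂ) • (h * S i 0 * (g 0)⁻¹))
      = ∑ i, ((g 0)⁻¹)ᴴ * ((p i : ℂ) • ((S i 0)ᴴ * H * S i 0)) * (g 0)⁻¹ := by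
        exact Finset.sum_congr rfl fun i _ => key i
    _ = ((g 0)⁻¹)ᴴ * (∑ i, (p i : ℂ) • ((S i 0)ᴴ * H * S i 0)) * (g 0)⁻¹ := by
        rw [Finset.mul_sum, Finset.sum_mul]
    _ = ((g 0)⁻¹)ᴴ * ((g 0)ᴴ * g 0) * (g 0)⁻¹ := by rw [hG]
    _ = (g 0 * (g 0)⁻¹)ᴴ * (g 0 * (g 0)⁻¹) := by
        simp [conjTranspose_mul, Matrix.mul_assoc]
    _ = 1 := by rw [hinv]; simp
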